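/- Let H be an infinite-dimensional real Hilbert space, let C ⊂ H be a symmetric convex body, let 𝐞 = {e_γ}_{γ∈Γ} be a complete orthonormal system of H and let k be a positive integer. Then (Q^k(𝐞, C))° = R^k(𝐞, C°), where Q^k(𝐞, C) = ⋂_{S ∈ [Γ]_k} P_{Γ∖S}⁻¹(P_{Γ∖S}(C)) and R^k(𝐞, C) is the closed convex hull of C ∩ ⋃_{S ∈ [Γ]_k} F(Γ∖S). -/

import Mathlib

open Set RealInnerProductSpace

/-- Orthogonal projection of a Hilbert space `H` onto the closed span of `T ⊆ H`,
viewed as a map `H → H`. -/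
noncomputable def projCl {H : Type*} [NormedAddCommGroup H] [InnerProductSpace ℝ H]
    [CompleteSpace H] (T : Set H) : H →L[ℝ] H :=
  haveI : CompleteSpace ((Submodule.span ℝ T).topologicalClosure) :=
    (Submodule.isClosed_topologicalClosure _).completeSpace_coe
  ((Submodule.span ℝ T).topologicalClosure).subtypeL.comp
    (Submodule.orthogonalProjectionOnto ((Submodule.span ℝ T).topologicalClosure))

/-- `E ⊆ H` is a complete orthonormal system: its elements are pairwise orthogonal unit
vectors and its span is dense in `H`. -/
def IsCompleteONS {H : Type*} [NormedAddCommGroup H] [InnerProductSpace ℝ H]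
    (E : Set H) : Prop :=
  Orthonormal ℝ ((↑) : E → H) ∧ (Submodule.span ℝ E).topologicalClosure = ⊤

/-- `Q^k(E, C) = ⋂_{S ∈ [E]_k} P_{E∖S}⁻¹(P_{E∖S}(C))`. -/
noncomputable def kCoConvexHullH {H : Type*} [NormedAddCommGroup H] [InnerProductSpace ℝ H]
    [CompleteSpace H] (E : Set H) (k : ℕ) (C : Set H) : Set H :=
  ⋂ S ∈ {S : Set H | S ⊆ E ∧ S.Finite ∧ S.ncard = k},
    projCl (E \ S) ⁻¹' (projCl (E \ S) '' C)

/-- `R^k(E, C)`: the closed convex hull of `C ∩ ⋃_{S ∈ [E]_k} F(E ∖ S)`. -/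
noncomputable def kCoCrossH {H : Type*} [NormedAddCommGroup H] [InnerProductSpace ℝ H]
    (E : Set H) (k : ℕ) (C : Set H) : Set H :=
  closure (convexHull ℝ (C ∩ ⋃ S ∈ {S : Set H | S ⊆ E ∧ S.Finite ∧ S.ncard = k},
    ((Submodule.span ℝ (E \ S)).topologicalClosure : Set H)))

/-- The polar of a set `A ⊆ H`. -/
def polarSetH {H : Type*} [NormedAddCommGroup H] [InnerProductSpace ℝ H] (A : Set H) :
    Set H :=
  {x | ∀ y ∈ A, ⟪x, y⟫ ≤ 1}

section Aux

open Filter Topology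

variable {H : Type*} [NormedAddCommGroup H] [InnerProductSpace ℝ H] [CompleteSpace H]

lemma projCl_mem (T : Set H) (x : H) :
    projCl T x ∈ (Submodule.span ℝ T).topologicalClosure := by
  haveI : CompleteSpace ((Submodule.span ℝ T).topologicalClosure) :=
    (Submodule.isClosed_topologicalClosure _).completeSpace_coe
  exact (Submodule.orthogonalProjectionOnto ((Submodule.span ℝ T).topologicalClosure) x).2

lemma projCl_eq_self (T : Set H) {y : H}
    (hy : y ∈ (Submodule.span ℝ T).topologicalClosure) : projCl T y = y := by
  haveI : CompleteSpace ((Submodule.span ℝ T).topologicalClosure) :=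
    (Submodule.isClosed_topologicalClosure _).completeSpace_coe
  exact Submodule.starProjection_eq_self_iff.mpr hy

lemma projCl_inner (T : Set H) (u v : H) : ⟪projCl T u, v⟫ = ⟪u, projCl T v⟫ := by
  haveI : CompleteSpace ((Submodule.span ℝ T).topologicalClosure) :=
    (Submodule.isClosed_topologicalClosure _).completeSpace_coe
  exact Submodule.inner_starProjection_left_eq_right _ u v

lemma polarSetH_zero_mem (A : Set H) : (0:H) ∈ polarSetH A := by
  intro y _; simp

lemma polarSetH_isClosed (A : Set H) : IsClosed (polarSetH A) := by
  have h : polarSetH A = ⋂ y ∈ A, {x : H | ⟪x, y⟫ ≤ 1} := by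
    ext x; simp [polarSetH]
  rw [h]
  exact isClosed_biInter fun y _ =>
    isClosed_le (Continuous.inner continuous_id continuous_const) continuous_const

lemma polarSetH_convex (A : Set H) : Convex ℝ (polarSetH A) := by
  intro x hx z hz a b ha hb hab
  intro y hy
  have h1 := hx y hy; have h2 := hz y hy
  rw [inner_add_left, real_inner_smul_left, real_inner_smul_left]
  nlinarith

/-- Separation of a point from a closed convex set containing the origin. -/
lemma exists_sep {B : Set H} (hBconv : Convex ℝ B) (hBcl : IsClosed B) (h0 : (0:H) ∈ B)
    {x : H} (hx : x ∉ B) : ∃ w : H, (∀ b ∈ B, ⟪b, w⟫ ≤ 1) ∧ 1 < ⟪x, w⟫ := by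
  obtain ⟨f, u, hf, hfx⟩ := geometric_hahn_banach_closed_point hBconv hBcl hx
  have hu0 : 0 < u := by have := hf 0 h0; simpa using this
  set v := (InnerProductSpace.toDual ℝ H).symm f with hv
  have hvz : ∀ z : H, ⟪v, z⟫ = f z := fun z => InnerProductSpace.toDual_symm_apply
  refine ⟨u⁻¹ • v, ?_, ?_⟩
  · intro b hb
    rw [real_inner_smul_right, real_inner_comm, hvz]
    calc u⁻¹ * f b ≤ u⁻¹ * u :=
          mul_le_mul_of_nonneg_left (hf b hb).le (by positivity)
      _ = 1 := inv_mul_cancel₀ hu0.ne'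
  · rw [real_inner_smul_right, real_inner_comm, hvz]
    calc (1:ℝ) = u⁻¹ * u := (inv_mul_cancel₀ hu0.ne').symm
      _ < u⁻¹ * f x := by
          exact mul_lt_mul_of_pos_left hfx (by positivity)

/-- A decreasing sequence of nonempty closed bounded convex sets in a Hilbert space has
nonempty intersection. -/
lemma nonempty_iInter_of_nested {Cn : ℕ → Set H} (hcl : ∀ n, IsClosed (Cn n))
    (hconv : ∀ n, Convex ℝ (Cn n)) (hne : ∀ n, (Cn n).Nonempty)
    (hmono : ∀ {n m : ℕ}, n ≤ m → Cn m ⊆ Cn n) (hbdd : Bornology.IsBounded (Cn 0)) :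
    (⋂ n, Cn n).Nonempty := by
  have hmin : ∀ n, ∃ v ∈ Cn n, ‖(0:H) - v‖ = ⨅ w : Cn n, ‖(0:H) - w‖ := fun n =>
    exists_norm_eq_iInf_of_complete_convex (hne n) (hcl n).isComplete (hconv n) 0
  choose x hx hxn using hmin
  set δ : ℕ → ℝ := fun n => ⨅ w : Cn n, ‖(0:H) - w‖ with hδdef
  have hδ_le : ∀ n, ∀ w ∈ Cn n, δ n ≤ ‖w‖ := by
    intro n w hw
    have : δ n ≤ ‖(0:H) - w‖ := by
      haveI : Nonempty (Cn n) := (hne n).to_subtype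
      exact ciInf_le ⟨0, Set.forall_mem_range.2 fun _ => norm_nonneg _⟩ (⟨w, hw⟩ : Cn n)
    rwa [zero_sub, norm_neg] at this
  have hxnorm : ∀ n, ‖x n‖ = δ n := by
    intro n; have := hxn n; rwa [zero_sub, norm_neg] at this
  have hδ0 : ∀ n, 0 ≤ δ n := fun n => (hxnorm n) ▸ norm_nonneg _
  have hδmono : Monotone δ := by
    intro n m hnm
    have := hδ_le n (x m) (hmono hnm (hx m))
    rwa [hxnorm m] at this
  have hδbdd : BddAbove (Set.range δ) := by
    obtain ⟨R, hR⟩ := isBounded_iff_forall_norm_le.mp hbdd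
    refine ⟨R, ?_⟩
    rintro _ ⟨n, rfl⟩
    rw [← hxnorm n]; exact hR _ (hmono (Nat.zero_le n) (hx n))
  set d : ℝ := ⨆ n, δ n with hd
  have hδd : ∀ n, δ n ≤ d := fun n => le_ciSup hδbdd n
  have hδtendsto : Tendsto δ atTop (𝓝 d) := tendsto_atTop_ciSup hδmono hδbdd
  have hkey : ∀ n m, n ≤ m → ‖x n - x m‖ ^ 2 ≤ 2 * (d ^ 2 - δ n ^ 2) := by
    intro n m hnm
    have hmid : (1/2:ℝ) • x n + (1/2:ℝ) • x m ∈ Cn n :=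
      hconv n (hx n) (hmono hnm (hx m)) (by norm_num) (by norm_num) (by norm_num)
    have h1 : δ n ≤ ‖(1/2:ℝ) • x n + (1/2:ℝ) • x m‖ := hδ_le n _ hmid
    have h2 : ‖(1/2:ℝ) • x n + (1/2:ℝ) • x m‖ = (1/2) * ‖x n + x m‖ := by
      rw [← smul_add, norm_smul]; simp
    have hpar := parallelogram_law_with_norm ℝ (x n) (x m)
    have hδm : δ m ≤ d := hδd m
    have hδnm : δ n ≤ δ m := hδmono hnm
    have e1 : ‖x n‖ = δ n := hxnorm n
    have e2 : ‖x m‖ = δ m := hxnorm m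
    have h3 : 2 * δ n ≤ ‖x n + x m‖ := by rw [h2] at h1; linarith
    have h4 : (2 * δ n) * (2 * δ n) ≤ ‖x n + x m‖ * ‖x n + x m‖ :=
      mul_self_le_mul_self (mul_nonneg (by norm_num) (hδ0 n)) h3
    nlinarith [hδ0 n, hδ0 m]
  set b : ℕ → ℝ := fun N => Real.sqrt (2 * (d ^ 2 - δ N ^ 2)) with hb
  have hb0 : Tendsto b atTop (𝓝 0) := by
    have h1 : Tendsto (fun N => 2 * (d ^ 2 - δ N ^ 2)) atTop (𝓝 (2 * (d ^ 2 - d ^ 2))) :=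
      tendsto_const_nhds.mul (tendsto_const_nhds.sub (hδtendsto.pow 2))
    have h2 : Tendsto (fun N => 2 * (d ^ 2 - δ N ^ 2)) atTop (𝓝 0) := by simpa using h1
    have h3 := (Real.continuous_sqrt.tendsto 0).comp h2
    rw [Real.sqrt_zero] at h3
    exact h3
  have hcauchy : CauchySeq x := by
    apply cauchySeq_of_le_tendsto_0' b ?_ hb0
    intro n m hnm
    have h1 := hkey n m hnm
    rw [dist_eq_norm]
    calc ‖x n - x m‖ = Real.sqrt (‖x n - x m‖ ^ 2) := (Real.sqrt_sq (norm_nonneg _)).symm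
      _ ≤ b n := Real.sqrt_le_sqrt h1
  obtain ⟨l, hl⟩ := cauchySeq_tendsto_of_complete hcauchy
  refine ⟨l, Set.mem_iInter.2 fun n => ?_⟩
  apply (hcl n).mem_of_tendsto hl
  filter_upwards [eventually_ge_atTop n] with m hm
  exact hmono hm (hx m)

/-- The image of a closed bounded convex set under a continuous linear map on a Hilbert
space is closed. -/
lemma isClosed_image_convex_bounded (P : H →L[ℝ] H) {C : Set H} (hCcl : IsClosed C)
    (hCconv : Convex ℝ C) (hCbdd : Bornology.IsBounded C) : IsClosed (P '' C) := by
  refine isClosed_of_closure_subset fun y hy => ?_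
  set Cn : ℕ → Set H := fun n => C ∩ P ⁻¹' Metric.closedBall y (1/((n:ℝ)+1)) with hCn
  have hne : ∀ n, (Cn n).Nonempty := by
    intro n
    have hpos : 0 < 1/((n:ℝ)+1) := by positivity
    obtain ⟨bb, hb, hdist⟩ := Metric.mem_closure_iff.mp hy _ hpos
    obtain ⟨c, hc, rfl⟩ := hb
    exact ⟨c, hc, by simpa [Metric.mem_closedBall, dist_comm] using hdist.le⟩
  have hcl : ∀ n, IsClosed (Cn n) := fun n =>
    hCcl.inter (Metric.isClosed_closedBall.preimage P.continuous)
  have hconv : ∀ n, Convex ℝ (Cn n) := fun n =>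
    hCconv.inter ((convex_closedBall y _).linear_preimage (P : H →ₗ[ℝ] H))
  have hmono : ∀ {n m : ℕ}, n ≤ m → Cn m ⊆ Cn n := by
    intro n m hnm
    apply Set.inter_subset_inter_right
    apply Set.preimage_mono
    apply Metric.closedBall_subset_closedBall
    apply one_div_le_one_div_of_le (by positivity)
    exact_mod_cast by exact_mod_cast Nat.add_le_add_right hnm 1
  have hbdd0 : Bornology.IsBounded (Cn 0) := hCbdd.subset Set.inter_subset_left
  obtain ⟨z, hz⟩ := nonempty_iInter_of_nested hcl hconv hne hmono hbdd0
  have hzC : z ∈ C := (Set.mem_iInter.mp hz 0).1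
  refine ⟨z, hzC, ?_⟩
  have hdd : ∀ n : ℕ, dist (P z) y ≤ 1/((n:ℝ)+1) := fun n => (Set.mem_iInter.mp hz n).2
  have : dist (P z) y ≤ 0 :=
    ge_of_tendsto' tendsto_one_div_add_atTop_nhds_zero_nat hdd
  exact dist_le_zero.mp this

/-- Key duality step: if `⟪d, w⟫ ≤ 1` for all `d` in `C° ∩ F(T)`, then
`P_T w ∈ P_T(C)`. -/
lemma projCl_mem_image (T : Set H) {C : Set H} (hCcl : IsClosed C) (hCconv : Convex ℝ C)
    (hCbdd : Bornology.IsBounded C) (h0 : (0:H) ∈ C) {w : H}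
    (hw : ∀ d, d ∈ polarSetH C →
      d ∈ (Submodule.span ℝ T).topologicalClosure → ⟪d, w⟫ ≤ 1) :
    projCl T w ∈ projCl T '' C := by
  by_contra hPw
  have himcl : IsClosed (projCl T '' C) :=
    isClosed_image_convex_bounded (projCl T) hCcl hCconv hCbdd
  have himconv : Convex ℝ (projCl T '' C) := by
    have := hCconv.linear_image (projCl T : H →ₗ[ℝ] H)
    simpa using this
  have h0im : (0:H) ∈ projCl T '' C := ⟨0, h0, map_zero _⟩
  obtain ⟨u, hu1, hu2⟩ := exists_sep himconv himcl h0im hPw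
  have hpolar : projCl T u ∈ polarSetH C := by
    intro c hc
    have h1 : ⟪projCl T c, u⟫ ≤ 1 := hu1 _ ⟨c, hc, rfl⟩
    calc ⟪projCl T u, c⟫ = ⟪u, projCl T c⟫ := projCl_inner T u c
      _ = ⟪projCl T c, u⟫ := real_inner_comm _ _
      _ ≤ 1 := h1
  have h1 := hw _ hpolar (projCl_mem T u)
  have h2 : ⟪projCl T u, w⟫ = ⟪projCl T w, u⟫ := by
    rw [projCl_inner T u w, real_inner_comm]
  linarith [hu2, h2 ▸ h1]

end Aux

/-- For a symmetric convex body `C` in an infinite-dimensional Hilbert space `H`, a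
complete orthonormal system `E` and a positive integer `k`,
`(Q^k(E, C))° = R^k(E, C°)`. -/
theorem stmt_13 {H : Type*} [NormedAddCommGroup H] [InnerProductSpace ℝ H] [CompleteSpace H]
    (hinf : ¬ FiniteDimensional ℝ H)
    (C : Set H) (hCcl : IsClosed C) (hCconv : Convex ℝ C)
    (hCbdd : Bornology.IsBounded C) (hCint : (interior C).Nonempty) (hCsym : C = -C)
    (E : Set H) (hE : IsCompleteONS E) (k : ℕ) (hk : 0 < k) :
    polarSetH (kCoConvexHullH E k C) = kCoCrossH E k (polarSetH C) := by
  obtain ⟨hON, htopcl⟩ := hE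
  -- `0 ∈ C`
  obtain ⟨z, hz⟩ := hCint
  have hzC : z ∈ C := interior_subset hz
  have hzC' : -z ∈ C := by rw [hCsym]; exact Set.neg_mem_neg.mpr hzC
  have h0C : (0:H) ∈ C := by
    have := hCconv hzC hzC' (by norm_num : (0:ℝ) ≤ 1/2) (by norm_num : (0:ℝ) ≤ 1/2)
      (by norm_num)
    simpa using this
  -- `E` is infinite, so the family of `k`-subsets is nonempty
  have hEinf : E.Infinite := by
    by_contra hfin
    rw [Set.not_infinite] at hfin
    haveI := FiniteDimensional.span_of_finite ℝ hfin
    have hclosed : IsClosed ((Submodule.span ℝ E : Submodule ℝ H) : Set H) :=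
      Submodule.closed_of_finiteDimensional _
    have heq : Submodule.span ℝ E = ⊤ := by
      rw [← htopcl, hclosed.submodule_topologicalClosure_eq]
    have : FiniteDimensional ℝ (⊤ : Submodule ℝ H) := heq ▸ this
    exact hinf (Module.Finite.equiv (Submodule.topEquiv))
  obtain ⟨S₀, hS₀sub, hS₀fin, hS₀card⟩ := hEinf.exists_subset_ncard_eq k
  have hS₀ : S₀ ∈ {S : Set H | S ⊆ E ∧ S.Finite ∧ S.ncard = k} := ⟨hS₀sub, hS₀fin, hS₀card⟩
  apply Set.Subset.antisymm
  · -- hard direction: `(Q^k)° ⊆ R^k(C°)`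
    intro x hx
    by_contra hxR
    have hRconv : Convex ℝ (kCoCrossH E k (polarSetH C)) := (convex_convexHull ℝ _).closure
    have hRcl : IsClosed (kCoCrossH E k (polarSetH C)) := isClosed_closure
    have h0R : (0:H) ∈ kCoCrossH E k (polarSetH C) := by
      apply subset_closure
      apply subset_convexHull
      refine ⟨polarSetH_zero_mem C, ?_⟩
      exact Set.mem_biUnion hS₀ (Submodule.zero_mem _)
    obtain ⟨w, hw1, hw2⟩ := exists_sep hRconv hRcl h0R hxR
    have hwQ : w ∈ kCoConvexHullH E k C := by
      rw [kCoConvexHullH, Set.mem_iInter₂]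
      intro S hS
      rw [Set.mem_preimage]
      apply projCl_mem_image (E \ S) hCcl hCconv hCbdd h0C
      intro d hd1 hd2
      apply hw1
      apply subset_closure
      apply subset_convexHull
      exact ⟨hd1, Set.mem_biUnion hS hd2⟩
    have := hx w hwQ
    linarith
  · -- easy direction: `R^k(C°) ⊆ (Q^k)°`
    apply closure_minimal ?_ (polarSetH_isClosed _)
    apply convexHull_min ?_ (polarSetH_convex _)
    rintro y ⟨hyC, hyU⟩
    rw [Set.mem_iUnion₂] at hyU
    obtain ⟨S, hS, hyF⟩ := hyU
    intro x hx
    rw [kCoConvexHullH, Set.mem_iInter₂] at hx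
    obtain ⟨c, hc, hPc⟩ := hx S hS
    calc ⟪y, x⟫ = ⟪projCl (E \ S) y, x⟫ := by rw [projCl_eq_self (E \ S) hyF]
      _ = ⟪y, projCl (E \ S) x⟫ := projCl_inner _ y x
      _ = ⟪y, projCl (E \ S) c⟫ := by rw [hPc]
      _ = ⟪projCl (E \ S) y, c⟫ := (projCl_inner _ y c).symm
      _ = ⟪y, c⟫ := by rw [projCl_eq_self (E \ S) hyF]
      _ ≤ 1 := hyC c hc
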